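/- arXiv:1512.05490 — 2 statements merged into one kernel-verified Lean document; each statement's English description precedes it below -/
import Mathlib

section
/- Let S = ((X,d), (f_i)_{i∈I}) be an iterated function system consisting of convex contractions, and for each ω ∈ I^ℕ let a_ω be the limit point such that h(f_{[ω]_n}(B), {a_ω}) → 0 for every B ∈ 𝒦(X). Then this convergence is uniform in ω: for every B ∈ 𝒦(X), sup_{ω ∈ I^ℕ} h(f_{[ω]_n}(B), {a_ω}) → 0 as n → ∞. -/
/-- `compWord f ω n = f (ω 0) ∘ f (ω 1) ∘ ... ∘ f (ω (n-1))`, i.e. the composition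
`f_{ω₁} ∘ ... ∘ f_{ω_n}` determined by the first `n` letters of the word `ω`. -/
def compWord {I X : Type*} (f : I → X → X) : (ℕ → I) → ℕ → X → X
  | _, 0 => id
  | ω, n + 1 => f (ω 0) ∘ compWord f (fun k => ω (k + 1)) n

lemma compWord_succ {I X : Type*} (f : I → X → X) (ω : ℕ → I) (n : ℕ) (x : X) :
    compWord f ω (n + 1) x = f (ω 0) (compWord f (fun k => ω (k + 1)) n x) := rfl

lemma compWord_succ' {I X : Type*} (f : I → X → X) (ω : ℕ → I) (n : ℕ) (x : X) :
    compWord f ω (n + 1) x = compWord f ω n (f (ω n) x) := by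
  induction n generalizing ω x with
  | zero => rfl
  | succ n ih =>
      rw [compWord_succ, ih, compWord_succ]

/-- Key contraction estimate, uniform over all words. -/
lemma compWord_dist_le {X : Type*} [MetricSpace X]
    {I : Type*} [Fintype I]
    (f : I → X → X) (a b c : I → I → ℝ)
    (ha : ∀ i j, 0 ≤ a i j) (hb : ∀ i j, 0 ≤ b i j) (hc : ∀ i j, 0 ≤ c i j)
    (hcc : ∀ i j (x y : X),
      dist (f i (f j x)) (f i (f j y)) ≤
        a i j * dist x y + b i j * dist (f i x) (f i y) + c i j * dist (f j x) (f j y))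
    (μ : ℝ) (hμ0 : 0 < μ) (hμ1 : μ ≤ 1)
    (hL : ∀ i j, a i j + b i j + c i j ≤ μ * μ)
    (x y : X) :
    ∀ n (ω : ℕ → I), dist (compWord f ω n x) (compWord f ω n y) ≤
      ((dist x y + ∑ i, dist (f i x) (f i y)) / μ) * μ ^ n := by
  set s : ℝ := ∑ i, dist (f i x) (f i y) with hs
  have hs0 : 0 ≤ s := Finset.sum_nonneg fun i _ => dist_nonneg
  set K : ℝ := (dist x y + s) / μ with hKdef
  have hK0 : 0 ≤ K := div_nonneg (by positivity) hμ0.le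
  have hbase0 : dist x y ≤ K * μ ^ 0 := by
    rw [pow_zero, mul_one, hKdef, le_div_iff₀ hμ0]
    nlinarith [dist_nonneg (x := x) (y := y)]
  have hbase1 : ∀ i, dist (f i x) (f i y) ≤ K * μ ^ 1 := by
    intro i
    have : K * μ ^ 1 = dist x y + s := by
      rw [pow_one, hKdef, div_mul_cancel₀ _ hμ0.ne']
    rw [this]
    have h1 : dist (f i x) (f i y) ≤ s :=
      Finset.single_le_sum (f := fun i => dist (f i x) (f i y))
        (fun i _ => dist_nonneg) (Finset.mem_univ i)
    nlinarith [dist_nonneg (x := x) (y := y)]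
  intro n
  induction n using Nat.strong_induction_on with
  | _ n ih =>
    match n with
    | 0 => intro ω; simpa [compWord] using hbase0
    | 1 => intro ω; simpa [compWord] using hbase1 (ω 0)
    | (n + 2) =>
      intro ω
      set u := compWord f (fun k => ω (k + 2)) n x with hu
      set v := compWord f (fun k => ω (k + 2)) n y with hv
      have e1 : compWord f ω (n + 2) x = f (ω 0) (f (ω 1) u) := rfl
      have e1' : compWord f ω (n + 2) y = f (ω 0) (f (ω 1) v) := rfl
      have h0 : dist u v ≤ K * μ ^ n := ih n (by omega) _
      have h2 : dist (f (ω 1) u) (f (ω 1) v) ≤ K * μ ^ (n + 1) :=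
        ih (n + 1) (by omega) (fun k => ω (k + 1))
      have h1 : dist (f (ω 0) u) (f (ω 0) v) ≤ K * μ ^ (n + 1) :=
        ih (n + 1) (by omega) (fun k => Nat.casesOn (motive := fun _ => I) k (ω 0) fun m => ω (m + 2))
      have hmono : μ ^ (n + 1) ≤ μ ^ n := pow_le_pow_of_le_one hμ0.le hμ1 (Nat.le_succ n)
      calc dist (compWord f ω (n + 2) x) (compWord f ω (n + 2) y)
          = dist (f (ω 0) (f (ω 1) u)) (f (ω 0) (f (ω 1) v)) := by rw [e1, e1']
        _ ≤ a (ω 0) (ω 1) * dist u v + b (ω 0) (ω 1) * dist (f (ω 0) u) (f (ω 0) v)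
            + c (ω 0) (ω 1) * dist (f (ω 1) u) (f (ω 1) v) := hcc _ _ _ _
        _ ≤ K * μ ^ (n + 2) := by
            have hab := hL (ω 0) (ω 1)
            have h3 : μ ^ (n + 2) = μ * μ * μ ^ n := by ring
            nlinarith [ha (ω 0) (ω 1), hb (ω 0) (ω 1), hc (ω 0) (ω 1),
              mul_nonneg hK0 (pow_nonneg hμ0.le n), mul_nonneg hK0 (pow_nonneg hμ0.le (n+1)),
              mul_le_mul_of_nonneg_left h0 (ha (ω 0) (ω 1)),
              mul_le_mul_of_nonneg_left h1 (hb (ω 0) (ω 1)),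
              mul_le_mul_of_nonneg_left h2 (hc (ω 0) (ω 1)),
              mul_le_mul_of_nonneg_left hmono hK0]

lemma hausdorffEdist_singleton_singleton {X : Type*} [EMetricSpace X] (x y : X) :
    EMetric.hausdorffEdist ({x} : Set X) {y} = edist x y := by
  apply le_antisymm
  · refine EMetric.hausdorffEdist_le_of_mem_edist ?_ ?_
    · rintro z rfl; exact ⟨y, rfl, le_rfl⟩
    · rintro z rfl; exact ⟨x, rfl, by rw [edist_comm]⟩
  · have h := EMetric.infEdist_le_hausdorffEdist_of_mem
      (show x ∈ ({x} : Set X) from rfl) (t := ({y} : Set X))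
    rw [EMetric.infEdist_singleton] at h; exact h

/-- The convergence of f_{[ω]_n}(B) to {a_ω} is uniform in the word ω. -/
theorem IFS_convex_contractions_uniform_limit
    {X : Type*} [MetricSpace X] [CompleteSpace X] [Nonempty X]
    {I : Type*} [Finite I] [Nonempty I]
    (f : I → X → X) (hf : ∀ i, Continuous (f i))
    (a b c : I → I → ℝ)
    (ha : ∀ i j, 0 ≤ a i j) (hb : ∀ i j, 0 ≤ b i j) (hc : ∀ i j, 0 ≤ c i j)
    (hd : ∀ i j, a i j + b i j + c i j < 1)
    (hcc : ∀ i j (x y : X),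
      dist (f i (f j x)) (f i (f j y)) ≤
        a i j * dist x y + b i j * dist (f i x) (f i y) + c i j * dist (f j x) (f j y))
    (aω : (ℕ → I) → X)
    (haω : ∀ (ω : ℕ → I) (B : Set X), B.Nonempty → IsCompact B →
      Filter.Tendsto
        (fun n : ℕ => EMetric.hausdorffEdist (compWord f ω n '' B) {aω ω})
        Filter.atTop (nhds 0)) :
    ∀ B : Set X, B.Nonempty → IsCompact B →
      Filter.Tendsto
        (fun n : ℕ => ⨆ ω : ℕ → I, EMetric.hausdorffEdist (compWord f ω n '' B) {aω ω})
        Filter.atTop (nhds 0) := by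
  have : Fintype I := Fintype.ofFinite I
  -- the contraction ratio
  obtain ⟨L, hL12, hL1, hLab⟩ :
      ∃ L : ℝ, 1/2 ≤ L ∧ L < 1 ∧ ∀ i j, a i j + b i j + c i j ≤ L := by
    refine ⟨max (Finset.univ.sup' Finset.univ_nonempty
      (fun p : I × I => a p.1 p.2 + b p.1 p.2 + c p.1 p.2)) (1/2),
      le_max_right _ _, ?_, ?_⟩
    · exact max_lt ((Finset.sup'_lt_iff _).2 fun p _ => hd p.1 p.2) (by norm_num)
    · intro i j
      exact le_trans (Finset.le_sup' (f := fun p : I × I => a p.1 p.2 + b p.1 p.2 + c p.1 p.2)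
        (Finset.mem_univ (i, j))) (le_max_left _ _)
  set μ : ℝ := Real.sqrt L with hμdef
  have hL0 : (0:ℝ) ≤ L := by linarith
  have hμsq : μ * μ = L := Real.mul_self_sqrt hL0
  have hμ0 : 0 < μ := Real.sqrt_pos.2 (by linarith)
  have hμlt1 : μ < 1 := by nlinarith
  have hμ1 : μ ≤ 1 := hμlt1.le
  have hLμ : ∀ i j, a i j + b i j + c i j ≤ μ * μ := by
    intro i j; rw [hμsq]; exact hLab i j
  have key := compWord_dist_le f a b c ha hb hc hcc μ hμ0 hμ1 hLμ
  intro B hBne hBc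
  obtain ⟨x₀, hx₀⟩ := hBne
  -- bound on the consecutive distances along the orbit of x₀
  set C : ℝ := ∑ i, (dist x₀ (f i x₀) + ∑ j, dist (f j x₀) (f j (f i x₀))) / μ with hCdef
  have hKC : ∀ i : I, (dist x₀ (f i x₀) + ∑ j, dist (f j x₀) (f j (f i x₀))) / μ ≤ C :=
    fun i => Finset.single_le_sum
      (f := fun i => (dist x₀ (f i x₀) + ∑ j, dist (f j x₀) (f j (f i x₀))) / μ)
      (fun i _ => div_nonneg (by positivity) hμ0.le) (Finset.mem_univ i)
  have hcauchy : ∀ (ω : ℕ → I) (n : ℕ),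
      dist (compWord f ω n x₀) (compWord f ω (n+1) x₀) ≤ C * μ ^ n := by
    intro ω n
    rw [compWord_succ']
    calc dist (compWord f ω n x₀) (compWord f ω n (f (ω n) x₀))
        ≤ ((dist x₀ (f (ω n) x₀) + ∑ j, dist (f j x₀) (f j (f (ω n) x₀))) / μ) * μ ^ n :=
          key x₀ (f (ω n) x₀) n ω
      _ ≤ C * μ ^ n := mul_le_mul_of_nonneg_right (hKC (ω n)) (pow_nonneg hμ0.le n)
  have htend : ∀ ω : ℕ → I,
      Filter.Tendsto (fun n => compWord f ω n x₀) Filter.atTop (nhds (aω ω)) := by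
    intro ω
    rw [tendsto_iff_edist_tendsto_0]
    have h := haω ω {x₀} ⟨x₀, rfl⟩ isCompact_singleton
    simpa [Set.image_singleton, hausdorffEdist_singleton_singleton] using h
  have hlim : ∀ (ω : ℕ → I) (n : ℕ),
      dist (compWord f ω n x₀) (aω ω) ≤ C * μ ^ n / (1 - μ) := fun ω n =>
    dist_le_of_le_geometric_of_tendsto μ C hμlt1 (hcauchy ω) (htend ω) n
  -- uniform bound of the "size" constant over B
  obtain ⟨z, hz, hmax⟩ := hBc.exists_isMaxOn ⟨x₀, hx₀⟩
    (Continuous.continuousOn <| (continuous_id.dist continuous_const).add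
      (continuous_finset_sum _ fun j _ => (hf j).dist continuous_const))
  set M : ℝ := dist z x₀ + ∑ j, dist (f j z) (f j x₀) with hMdef
  set R : ℝ := M / μ + C / (1 - μ) with hRdef
  have hR : ∀ (ω : ℕ → I) (n : ℕ) (x : X), x ∈ B →
      dist (compWord f ω n x) (aω ω) ≤ R * μ ^ n := by
    intro ω n x hx
    have h1 : dist (compWord f ω n x) (compWord f ω n x₀) ≤
        ((dist x x₀ + ∑ j, dist (f j x) (f j x₀)) / μ) * μ ^ n := key x x₀ n ω
    have h2 : (dist x x₀ + ∑ j, dist (f j x) (f j x₀)) / μ ≤ M / μ :=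
      div_le_div_of_nonneg_right (hmax hx) hμ0.le
    have h3 := hlim ω n
    have hpn : (0:ℝ) ≤ μ ^ n := pow_nonneg hμ0.le n
    calc dist (compWord f ω n x) (aω ω)
        ≤ dist (compWord f ω n x) (compWord f ω n x₀) + dist (compWord f ω n x₀) (aω ω) :=
          dist_triangle _ _ _
      _ ≤ (M / μ) * μ ^ n + C * μ ^ n / (1 - μ) := by
          refine add_le_add (h1.trans (mul_le_mul_of_nonneg_right h2 hpn)) h3
      _ = R * μ ^ n := by rw [hRdef]; ring
  have hsup : ∀ n : ℕ,
      (⨆ ω : ℕ → I, EMetric.hausdorffEdist (compWord f ω n '' B) {aω ω}) ≤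
        ENNReal.ofReal (R * μ ^ n) := by
    intro n
    refine iSup_le fun ω => EMetric.hausdorffEdist_le_of_mem_edist ?_ ?_
    · rintro _ ⟨x, hx, rfl⟩
      exact ⟨aω ω, rfl, by rw [edist_dist]; exact ENNReal.ofReal_le_ofReal (hR ω n x hx)⟩
    · rintro y rfl
      exact ⟨compWord f ω n x₀, Set.mem_image_of_mem _ hx₀,
        by rw [edist_comm, edist_dist]; exact ENNReal.ofReal_le_ofReal (hR ω n x₀ hx₀)⟩
  have hub : Filter.Tendsto (fun n : ℕ => ENNReal.ofReal (R * μ ^ n))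
      Filter.atTop (nhds 0) := by
    have h1 : Filter.Tendsto (fun n : ℕ => R * μ ^ n) Filter.atTop (nhds 0) := by
      simpa using (tendsto_pow_atTop_nhds_zero_of_lt_one hμ0.le hμlt1).const_mul R
    simpa using ENNReal.tendsto_ofReal h1
  exact tendsto_of_tendsto_of_tendsto_of_le_of_le tendsto_const_nhds hub
    (fun n => zero_le) hsup
end

section
/- Let S = ((X,d), (f_i)_{i∈I}) be an iterated function system consisting of convex contractions with attractor A (the unique fixed point of F_S in 𝒦(X)), and for each ω ∈ I^ℕ let a_ω be the associated point with h(f_{[ω]_n}(B), {a_ω}) → 0 for all B ∈ 𝒦(X). Then A equals the closure of {a_ω : ω ∈ I^ℕ}. -/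
lemma compWord_succ_right {I X : Type*} (f : I → X → X) :
    ∀ (n : ℕ) (ω : ℕ → I) (x : X),
      compWord f ω (n + 1) x = compWord f ω n (f (ω n) x) := by
  intro n
  induction n with
  | zero => intro ω x; rfl
  | succ n ih =>
    intro ω x
    show f (ω 0) (compWord f (fun k => ω (k + 1)) (n + 1) x) = _
    rw [ih (fun k => ω (k + 1)) x]
    rfl

/-- The attractor equals the closure of the set of points a_ω. -/
theorem IFS_convex_contractions_attractor_eq_closure_range
    {X : Type*} [MetricSpace X] [CompleteSpace X] [Nonempty X]
    {I : Type*} [Finite I] [Nonempty I]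
    (f : I → X → X) (hf : ∀ i, Continuous (f i))
    (a b c : I → I → ℝ)
    (ha : ∀ i j, 0 ≤ a i j) (hb : ∀ i j, 0 ≤ b i j) (hc : ∀ i j, 0 ≤ c i j)
    (hd : ∀ i j, a i j + b i j + c i j < 1)
    (hcc : ∀ i j (x y : X),
      dist (f i (f j x)) (f i (f j y)) ≤
        a i j * dist x y + b i j * dist (f i x) (f i y) + c i j * dist (f j x) (f j y))
    (A : Set X) (hAne : A.Nonempty) (hAc : IsCompact A) (hAfix : (⋃ i, f i '' A) = A)
    (aω : (ℕ → I) → X)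
    (haω : ∀ (ω : ℕ → I) (B : Set X), B.Nonempty → IsCompact B →
      Filter.Tendsto
        (fun n : ℕ => EMetric.hausdorffEdist (compWord f ω n '' B) {aω ω})
        Filter.atTop (nhds 0)) :
    A = closure (Set.range aω) := by
  -- images of A under compWord stay in A
  have himg : ∀ (n : ℕ) (ω : ℕ → I), compWord f ω n '' A ⊆ A := by
    intro n
    induction n with
    | zero => intro ω; simp [compWord]
    | succ n ih =>
      intro ω
      have : compWord f ω (n + 1) '' A
          = f (ω 0) '' (compWord f (fun k => ω (k + 1)) n '' A) := by
        rw [← Set.image_comp]; rfl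
      rw [this]
      intro y hy
      obtain ⟨z, hz, rfl⟩ := hy
      have hzA : z ∈ A := ih _ hz
      have : f (ω 0) z ∈ ⋃ i, f i '' A := Set.mem_iUnion.2 ⟨ω 0, ⟨z, hzA, rfl⟩⟩
      rwa [hAfix] at this
  apply Set.Subset.antisymm
  · -- A ⊆ closure (range aω); indeed A ⊆ range aω
    intro x hx
    have hstep : ∀ y : X, y ∈ A → ∃ p : I × X, p.2 ∈ A ∧ f p.1 p.2 = y := by
      intro y hy
      have : y ∈ ⋃ i, f i '' A := by rw [hAfix]; exact hy
      obtain ⟨i, ⟨z, hz, hfz⟩⟩ := Set.mem_iUnion.1 this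
      exact ⟨(i, z), hz, hfz⟩
    choose step hstepA hstepf using hstep
    -- the chain of preimages
    let chain : ℕ → {y : X // y ∈ A} := fun n =>
      Nat.rec ⟨x, hx⟩ (fun _ p => ⟨(step p.1 p.2).2, hstepA p.1 p.2⟩) n
    let ω : ℕ → I := fun n => (step (chain n).1 (chain n).2).1
    have hchain : ∀ n, f (ω n) (chain (n + 1)).1 = (chain n).1 := fun n =>
      hstepf (chain n).1 (chain n).2
    have hcomp : ∀ n, compWord f ω n (chain n).1 = x := by
      intro n
      induction n with
      | zero => rfl
      | succ n ih =>
        rw [compWord_succ_right, hchain n, ih]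
    -- x belongs to each image, hence edist x (aω ω) = 0
    have hle : ∀ n, edist x (aω ω) ≤
        EMetric.hausdorffEdist (compWord f ω n '' A) {aω ω} := by
      intro n
      have hxmem : x ∈ compWord f ω n '' A :=
        ⟨(chain n).1, (chain n).2, hcomp n⟩
      have := EMetric.infEdist_le_hausdorffEdist_of_mem
        (t := {aω ω}) hxmem
      rwa [EMetric.infEdist_singleton] at this
    have h0 : edist x (aω ω) ≤ 0 := ge_of_tendsto' (haω ω A hAne hAc) hle
    have : x = aω ω := by
      rw [← edist_le_zero]; exact h0
    exact subset_closure ⟨ω, this.symm⟩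
  · -- closure (range aω) ⊆ A
    apply closure_minimal _ hAc.isClosed
    rintro _ ⟨ω, rfl⟩
    have hle : ∀ n, EMetric.infEdist (aω ω) A ≤
        EMetric.hausdorffEdist (compWord f ω n '' A) {aω ω} := by
      intro n
      have h1 : EMetric.infEdist (aω ω) (compWord f ω n '' A) ≤
          EMetric.hausdorffEdist (compWord f ω n '' A) {aω ω} := by
        rw [EMetric.hausdorffEdist, EMetric.hausdorffEdist_comm]
        exact EMetric.infEdist_le_hausdorffEdist_of_mem rfl
      exact le_trans (EMetric.infEdist_anti (himg n ω)) h1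
    have h0 : EMetric.infEdist (aω ω) A ≤ 0 :=
      ge_of_tendsto' (haω ω A hAne hAc) hle
    have hz : EMetric.infEdist (aω ω) A = 0 := le_antisymm h0 zero_le
    exact (EMetric.mem_iff_infEdist_zero_of_closed hAc.isClosed).2 hz
end
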